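/- Fix β > 0, a finite W ⊂ Z^d, and deterministic coupling configurations J, J̄ ∈ ℝ^{E_d} that agree on every edge not in W*; write ΔJ_{xy} = J̄_{xy} − J_{xy} for {x,y} ∈ W* and H_{W,ΔJ}(σ) = Σ_{{x,y}∈W*} ΔJ_{xy} σ_x σ_y. Suppose that along a sequence of finite volumes Λ_{L_k} ↑ Z^d (with W ⊂ Λ_{L_1}) the product measures ∏_{i∈ℕ} G_{Λ_{L_k},β,J}(dσ^i) converge in finite-dimensional distributions to a measure M_J on S^ℕ, and likewise ∏_{i∈ℕ} G_{Λ_{L_k},β,J̄}(dσ^i) converge to M_{J̄}. Then for every s ∈ ℕ and every bounded continuous F on S^s, M_{J̄}(F(σ^1,…,σ^s)) = M_J( e^{β Σ_{i=1}^s H_{W,ΔJ}(σ^i)} F(σ^1,…,σ^s) ) / M_J( ∏_{i=1}^s e^{β H_{W,ΔJ}(σ^i)} ). -/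

import Mathlib

open MeasureTheory ProbabilityTheory Filter
open scoped ENNReal

noncomputable section

/-- Sites of `ℤ^d`. -/
abbrev Site (d : ℕ) := Fin d → ℤ
/-- Spin configurations on `ℤ^d`: `S = {−1,+1}^{ℤ^d}`, with `Bool` coding spins. -/
abbrev Config (d : ℕ) := Site d → Bool
/-- Nearest-neighbour edges of `ℤ^d`, parametrized by (site, direction). -/
abbrev Edge (d : ℕ) := Site d × Fin d

/-- The spin value `±1` of a Boolean. -/
def spin (b : Bool) : ℝ := if b then 1 else -1

/-- Second endpoint of an edge. -/
def ep2 {d : ℕ} (e : Edge d) : Site d := fun j => e.1 j + if j = e.2 then 1 else 0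

/-- The box `Λ_L = {−L,…,L}^d`. -/
def box (d L : ℕ) : Finset (Site d) := Fintype.piFinset fun _ => Finset.Icc (-(L : ℤ)) (L : ℤ)

/-- `W*`: the edges with both endpoints in `W`. -/
def edgesIn {d : ℕ} (W : Finset (Site d)) : Finset (Edge d) :=
  (W ×ˢ (Finset.univ : Finset (Fin d))).filter fun e => ep2 e ∈ W

/-- `∑_{e ∈ E} J_e σ_x σ_y`, the (negative of the) Hamiltonian restricted to edge set `E`. -/
def energy {d : ℕ} (E : Finset (Edge d)) (J : Edge d → ℝ) (σ : Config d) : ℝ :=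
  ∑ e ∈ E, J e * spin (σ e.1) * spin (σ (ep2 e))

/-- Extend a configuration on `Λ` to `ℤ^d` by `+1` outside `Λ`. -/
def extendConfig {d : ℕ} (Λ : Finset (Site d)) (σ : ↥Λ → Bool) : Config d :=
  fun x => if h : x ∈ Λ then σ ⟨x, h⟩ else true

/-- Finite-volume Gibbs-type measure on `S` for a weight `w`, supported on configurations
equal to `+1` off `Λ`. -/
def finGibbs {d : ℕ} (Λ : Finset (Site d)) (w : Config d → ℝ) : Measure (Config d) :=
  (∑ σ : ↥Λ → Bool, ENNReal.ofReal (w (extendConfig Λ σ)))⁻¹ •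
    ∑ σ : ↥Λ → Bool, ENNReal.ofReal (w (extendConfig Λ σ)) • Measure.dirac (extendConfig Λ σ)

/-- The EA Gibbs measure `G_{Λ,β,J}` (free boundary conditions), regarded as a measure on `S`. -/
def eaGibbs {d : ℕ} (Λ : Finset (Site d)) (β : ℝ) (J : Edge d → ℝ) : Measure (Config d) :=
  finGibbs Λ fun σ => Real.exp (β * energy (edgesIn Λ) J σ)

/-- `ν` is the product over the index set of standard Gaussians: all finite-dimensional
marginals are standard Gaussian product measures. -/
def stdGaussianProduct {ι : Type} (ν : Measure (ι → ℝ)) : Prop :=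
  IsProbabilityMeasure ν ∧
    ∀ A : Finset ι, ν.map (fun J (e : ↥A) => J ↑e) = Measure.pi fun _ : ↥A => gaussianReal 0 1

/-- The limit edge overlap `R^W` in the window `W`. -/
def overlapW {d : ℕ} (W : Finset (Site d)) (σ σ' : Config d) : ℝ :=
  ((edgesIn W).card : ℝ)⁻¹ *
    ∑ e ∈ edgesIn W, spin (σ e.1) * spin (σ (ep2 e)) * spin (σ' e.1) * spin (σ' (ep2 e))

/-- The limit edge overlap `R = lim_L R^{Λ_L}` (defined via `limUnder`; it equals the limit
whenever the limit exists). -/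
def overlap (d : ℕ) (σ σ' : Config d) : ℝ :=
  limUnder atTop fun L => overlapW (box d L) σ σ'

/-- The index set of pairs `1 ≤ i < j ≤ s` of replicas. -/
abbrev Pairs (s : ℕ) := {p : Fin s × Fin s // p.1 < p.2}

/-- The finite product of standard Gaussians. -/
def gaussPi (ι : Type) [Fintype ι] : Measure (ι → ℝ) := Measure.pi fun _ => gaussianReal 0 1

/-- Extend a family of couplings indexed by a finite edge set by `0`. -/
def extendE {d : ℕ} (E : Finset (Edge d)) (J : ↥E → ℝ) : Edge d → ℝ :=
  fun e => if h : e ∈ E then J ⟨e, h⟩ else 0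

/-- Translation `T_a` acting on configurations: `(T_a σ)_x = σ_{x+a}`. -/
def trC {d : ℕ} (a : Site d) (σ : Config d) : Config d := fun x => σ (x + a)

/-- Translation `T_a` acting on couplings: `(T_a J)_{{x,y}} = J_{{x+a,y+a}}`. -/
def trJ {d : ℕ} (a : Site d) (J : Edge d → ℝ) : Edge d → ℝ := fun e => J (e.1 + a, e.2)


namespace EAcov

open MeasureTheory

variable {d : ℕ}

lemma abs_spin (b : Bool) : |spin b| = 1 := by cases b <;> simp [spin]

lemma continuous_spin_apply (x : Site d) : Continuous fun σ : Config d => spin (σ x) :=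
  (continuous_of_discreteTopology (f := spin)).comp (continuous_apply x)

lemma continuous_energy (E : Finset (Edge d)) (J : Edge d → ℝ) :
    Continuous fun σ : Config d => energy E J σ := by
  refine continuous_finset_sum _ fun e _ => ?_
  exact (continuous_const.mul (continuous_spin_apply e.1)).mul (continuous_spin_apply (ep2 e))

lemma energy_abs_le (E : Finset (Edge d)) (J : Edge d → ℝ) (σ : Config d) :
    |energy E J σ| ≤ ∑ e ∈ E, |J e| := by
  refine (Finset.abs_sum_le_sum_abs _ _).trans (Finset.sum_le_sum fun e _ => ?_)
  rw [abs_mul, abs_mul, abs_spin, abs_spin, mul_one, mul_one]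

lemma energy_sub (E : Finset (Edge d)) (J J' : Edge d → ℝ) (σ : Config d) :
    energy E J' σ - energy E J σ = energy E (J' - J) σ := by
  simp only [energy, Pi.sub_apply, ← Finset.sum_sub_distrib, sub_mul]

lemma edgesIn_mono {W Λ : Finset (Site d)} (h : W ⊆ Λ) : edgesIn W ⊆ edgesIn Λ := by
  intro e he
  rw [edgesIn, Finset.mem_filter, Finset.mem_product] at he ⊢
  exact ⟨⟨h he.1.1, he.1.2⟩, h he.2⟩

lemma energy_decomp {W E : Finset (Edge d)} {J Jbar : Edge d → ℝ}
    (hWE : W ⊆ E) (hagree : ∀ e ∉ W, Jbar e = J e) (σ : Config d) :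
    energy E Jbar σ = energy E J σ + energy W (Jbar - J) σ := by
  have h1 : energy E (Jbar - J) σ = energy W (Jbar - J) σ := by
    refine (Finset.sum_subset hWE fun e _ hne => ?_).symm
    simp [Pi.sub_apply, hagree e hne]
  have h2 := energy_sub E J Jbar σ
  linarith

lemma box_mono {L1 L2 : ℕ} (h : L1 ≤ L2) : box d L1 ⊆ box d L2 := by
  refine Fintype.piFinset_subset _ _ fun a => ?_
  exact Finset.Icc_subset_Icc (by exact_mod_cast neg_le_neg (Int.ofNat_le.2 h)) (by exact_mod_cast h)

/-- Real partition function. -/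
noncomputable def Zr (Λ : Finset (Site d)) (β : ℝ) (J : Edge d → ℝ) : ℝ :=
  ∑ t : ↥Λ → Bool, Real.exp (β * energy (edgesIn Λ) J (extendConfig Λ t))

lemma Zr_pos (Λ : Finset (Site d)) (β : ℝ) (J : Edge d → ℝ) : 0 < Zr Λ β J :=
  Finset.sum_pos (fun t _ => Real.exp_pos _) ⟨fun _ => true, Finset.mem_univ _⟩

/-- Normalized Gibbs weight. -/
noncomputable def gw (Λ : Finset (Site d)) (β : ℝ) (J : Edge d → ℝ) (t : ↥Λ → Bool) : ℝ :=
  Real.exp (β * energy (edgesIn Λ) J (extendConfig Λ t)) / Zr Λ β J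

lemma gw_pos (Λ : Finset (Site d)) (β : ℝ) (J : Edge d → ℝ) (t : ↥Λ → Bool) :
    0 < gw Λ β J t := div_pos (Real.exp_pos _) (Zr_pos Λ β J)

lemma gw_sum (Λ : Finset (Site d)) (β : ℝ) (J : Edge d → ℝ) :
    ∑ t : ↥Λ → Bool, gw Λ β J t = 1 := by
  unfold gw
  rw [← Finset.sum_div]
  exact div_self (Zr_pos Λ β J).ne'

/-- The Gibbs measure on the finite configuration space. -/
noncomputable def nuP (Λ : Finset (Site d)) (β : ℝ) (J : Edge d → ℝ) : Measure (↥Λ → Bool) :=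
  ∑ t : ↥Λ → Bool, ENNReal.ofReal (gw Λ β J t) • Measure.dirac t

lemma nuP_apply (Λ : Finset (Site d)) (β : ℝ) (J : Edge d → ℝ) (A : Set (↥Λ → Bool)) :
    nuP Λ β J A = ∑ t : ↥Λ → Bool, ENNReal.ofReal (gw Λ β J t) * Measure.dirac t A := by
  rw [nuP, Measure.finset_sum_apply]
  simp [Measure.smul_apply, smul_eq_mul]

instance (Λ : Finset (Site d)) (β : ℝ) (J : Edge d → ℝ) : IsProbabilityMeasure (nuP Λ β J) := by
  constructor
  rw [nuP_apply]
  simp only [MeasureTheory.measure_univ, mul_one]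
  rw [← ENNReal.ofReal_sum_of_nonneg (fun t _ => (gw_pos Λ β J t).le), gw_sum]
  simp

lemma nuP_singleton (Λ : Finset (Site d)) (β : ℝ) (J : Edge d → ℝ) (t : ↥Λ → Bool) :
    nuP Λ β J {t} = ENNReal.ofReal (gw Λ β J t) := by
  rw [nuP_apply]
  have : ∀ t' : ↥Λ → Bool, Measure.dirac t' ({t} : Set (↥Λ → Bool))
      = if t' = t then 1 else 0 := by
    intro t'
    rw [Measure.dirac_apply' _ (MeasurableSet.singleton t)]
    simp [Set.indicator_apply]
  simp only [this, mul_ite, mul_one, mul_zero]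
  simp [Finset.sum_ite_eq']

lemma ofReal_exp_gw (Λ : Finset (Site d)) (β : ℝ) (J : Edge d → ℝ) (t : ↥Λ → Bool) :
    (∑ t' : ↥Λ → Bool,
        ENNReal.ofReal (Real.exp (β * energy (edgesIn Λ) J (extendConfig Λ t'))))⁻¹ *
      ENNReal.ofReal (Real.exp (β * energy (edgesIn Λ) J (extendConfig Λ t)))
      = ENNReal.ofReal (gw Λ β J t) := by
  rw [← ENNReal.ofReal_sum_of_nonneg (fun t' _ => (Real.exp_pos _).le)]
  rw [gw, ENNReal.ofReal_div_of_pos (Zr_pos Λ β J), Zr, div_eq_mul_inv, mul_comm]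

lemma eaGibbs_apply (Λ : Finset (Site d)) (β : ℝ) (J : Edge d → ℝ) {A : Set (Config d)}
    (hA : MeasurableSet A) :
    eaGibbs Λ β J A
      = ∑ t : ↥Λ → Bool, ENNReal.ofReal (gw Λ β J t) * A.indicator 1 (extendConfig Λ t) := by
  rw [eaGibbs, finGibbs, Measure.smul_apply, Measure.finset_sum_apply, smul_eq_mul,
    Finset.mul_sum]
  refine Finset.sum_congr rfl fun t _ => ?_
  rw [Measure.smul_apply, smul_eq_mul, ← mul_assoc, ofReal_exp_gw,
    Measure.dirac_apply' _ hA]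

instance eaGibbs_prob (Λ : Finset (Site d)) (β : ℝ) (J : Edge d → ℝ) :
    IsProbabilityMeasure (eaGibbs Λ β J) := by
  constructor
  rw [eaGibbs_apply Λ β J MeasurableSet.univ]
  simp only [Set.indicator_univ, Pi.one_apply, mul_one]
  rw [← ENNReal.ofReal_sum_of_nonneg (fun t _ => (gw_pos Λ β J t).le), gw_sum]
  simp

lemma eaGibbs_pi_eq_map (Λ : Finset (Site d)) (β : ℝ) (J : Edge d → ℝ) (s : ℕ) :
    (Measure.pi fun _ : Fin s => eaGibbs Λ β J)
      = Measure.map (fun (x : Fin s → ↥Λ → Bool) (i : Fin s) => extendConfig Λ (x i))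
          (Measure.pi fun _ : Fin s => nuP Λ β J) := by
  refine Measure.pi_eq fun A hA => ?_
  rw [Measure.map_apply (measurable_of_countable _) (MeasurableSet.univ_pi hA)]
  have hpre : (fun (x : Fin s → ↥Λ → Bool) (i : Fin s) => extendConfig Λ (x i)) ⁻¹'
      Set.univ.pi A = Set.univ.pi fun i => extendConfig Λ ⁻¹' A i := by
    ext x; simp [Set.mem_univ_pi]
  rw [hpre, Measure.pi_pi]
  refine Finset.prod_congr rfl fun i _ => ?_
  rw [nuP_apply, eaGibbs_apply Λ β J (hA i)]
  refine Finset.sum_congr rfl fun t _ => ?_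
  congr 1
  rw [Measure.dirac_apply' _ ((Set.toFinite _).measurableSet)]
  by_cases h : extendConfig Λ t ∈ A i <;> simp [Set.indicator_apply, h]

/-- Master integration formula for replica products of EA Gibbs measures. -/
lemma integral_pi_eaGibbs (Λ : Finset (Site d)) (β : ℝ) (J : Edge d → ℝ) (s : ℕ)
    (g : (Fin s → Config d) → ℝ) (hg : Continuous g) :
    ∫ σ, g σ ∂(Measure.pi fun _ : Fin s => eaGibbs Λ β J)
      = ∑ x : Fin s → (↥Λ → Bool),
          (∏ i, gw Λ β J (x i)) * g (fun i => extendConfig Λ (x i)) := by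
  rw [eaGibbs_pi_eq_map,
    integral_map (measurable_of_countable _).aemeasurable
      hg.measurable.aestronglyMeasurable,
    integral_fintype Integrable.of_finite]
  refine Finset.sum_congr rfl fun x _ => ?_
  rw [smul_eq_mul, measureReal_def]
  congr 1
  rw [← Set.univ_pi_singleton x, Measure.pi_pi]
  simp only [nuP_singleton]
  rw [ENNReal.toReal_prod]
  exact Finset.prod_congr rfl fun i _ => ENNReal.toReal_ofReal (gw_pos Λ β J (x i)).le

end EAcov

/-- covariance property of limits of EA Gibbs measures under a local change
of couplings.  Let `J` and `J̄` agree off `W*` and set `ΔJ = J̄ − J` on `W*`.  If along boxes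
`Λ_{L_k} ↑ ℤ^d` the replica measures of `G_{Λ_{L_k},β,J}` converge in finite-dimensional
distributions to `M_J` and those of `G_{Λ_{L_k},β,J̄}` to `M_{J̄}`, then for every `s` and
every bounded continuous `F` on `S^s`:
`M_{J̄}(F) = M_J(e^{βΣ_i H_{W,ΔJ}(σ^i)} F)/M_J(∏_i e^{βH_{W,ΔJ}(σ^i)})`. -/
theorem ea_limit_covariance (d : ℕ) (β : ℝ) (hβ : 0 < β)
    (W : Finset (Site d)) (J Jbar : Edge d → ℝ)
    (hagree : ∀ e ∉ edgesIn W, Jbar e = J e)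
    (L : ℕ → ℕ) (hL : StrictMono L) (hWL : W ⊆ box d (L 0))
    (MJ MJbar : Measure (ℕ → Config d))
    [IsProbabilityMeasure MJ] [IsProbabilityMeasure MJbar]
    (h1 : ∀ (m : ℕ) (g : (Fin m → Config d) → ℝ), Continuous g →
      Tendsto (fun k => ∫ σ, g σ ∂(Measure.pi fun _ : Fin m => eaGibbs (box d (L k)) β J))
        atTop (nhds (∫ σ, g (fun i => σ i.1) ∂MJ)))
    (h2 : ∀ (m : ℕ) (g : (Fin m → Config d) → ℝ), Continuous g →
      Tendsto (fun k => ∫ σ, g σ ∂(Measure.pi fun _ : Fin m => eaGibbs (box d (L k)) β Jbar))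
        atTop (nhds (∫ σ, g (fun i => σ i.1) ∂MJbar))) :
    ∀ (s : ℕ) (F : (Fin s → Config d) → ℝ), Continuous F →
      (∫ σ, F (fun i => σ i.1) ∂MJbar)
        = (∫ σ, Real.exp (β * ∑ i : Fin s, energy (edgesIn W) (Jbar - J) (σ i.1)) *
              F (fun i => σ i.1) ∂MJ)
          / ∫ σ, ∏ i : Fin s, Real.exp (β * energy (edgesIn W) (Jbar - J) (σ i.1)) ∂MJ := by
  classical
  intro s F hF
  -- continuous test functions
  set ψ : Config d → ℝ := fun σ => Real.exp (β * energy (edgesIn W) (Jbar - J) σ) with hψdef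
  set gN : (Fin s → Config d) → ℝ :=
    fun X => Real.exp (β * ∑ i : Fin s, energy (edgesIn W) (Jbar - J) (X i)) * F X with hgNdef
  set gD : (Fin s → Config d) → ℝ := fun X => ∏ i : Fin s, ψ (X i) with hgDdef
  have hψc : Continuous ψ :=
    Real.continuous_exp.comp (continuous_const.mul (EAcov.continuous_energy _ _))
  have hEi : ∀ i : Fin s,
      Continuous fun X : Fin s → Config d => energy (edgesIn W) (Jbar - J) (X i) :=
    fun i => (EAcov.continuous_energy _ _).comp (continuous_apply i)
  have hgNc : Continuous gN :=
    (Real.continuous_exp.comp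
      (continuous_const.mul (continuous_finset_sum _ fun i _ => hEi i))).mul hF
  have hgDc : Continuous gD :=
    continuous_finset_prod _ fun i _ => hψc.comp (continuous_apply i)
  have hψpos : ∀ σ, 0 < ψ σ := fun σ => Real.exp_pos _
  -- finite-volume covariance identity
  have key : ∀ k,
      (∫ σ, gN σ ∂(Measure.pi fun _ : Fin s => eaGibbs (box d (L k)) β J))
        = (∫ σ, F σ ∂(Measure.pi fun _ : Fin s => eaGibbs (box d (L k)) β Jbar))
          * (∫ σ, gD σ ∂(Measure.pi fun _ : Fin s => eaGibbs (box d (L k)) β J)) := by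
    intro k
    set Λ : Finset (Site d) := box d (L k) with hΛdef
    have hWΛ : W ⊆ Λ := hWL.trans (EAcov.box_mono (hL.monotone (Nat.zero_le k)))
    have hsub : edgesIn W ⊆ edgesIn Λ := EAcov.edgesIn_mono hWΛ
    have hwrel : ∀ t : ↥Λ → Bool,
        Real.exp (β * energy (edgesIn Λ) Jbar (extendConfig Λ t))
          = Real.exp (β * energy (edgesIn Λ) J (extendConfig Λ t)) * ψ (extendConfig Λ t) := by
      intro t
      rw [EAcov.energy_decomp hsub hagree, mul_add, Real.exp_add, hψdef]
    set S1 : ℝ := ∑ t : ↥Λ → Bool, EAcov.gw Λ β J t * ψ (extendConfig Λ t) with hS1def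
    have hS1pos : 0 < S1 :=
      Finset.sum_pos (fun t _ => mul_pos (EAcov.gw_pos _ _ _ _) (hψpos _))
        ⟨fun _ => true, Finset.mem_univ _⟩
    have hne : EAcov.Zr Λ β J ≠ 0 := (EAcov.Zr_pos Λ β J).ne'
    have e2 : ∀ t : ↥Λ → Bool, Real.exp (β * energy (edgesIn Λ) J (extendConfig Λ t))
        = EAcov.Zr Λ β J * EAcov.gw Λ β J t := by
      intro t
      unfold EAcov.gw
      field_simp
    have hZbar : EAcov.Zr Λ β Jbar = EAcov.Zr Λ β J * S1 := by
      have e1 : EAcov.Zr Λ β Jbar = ∑ t : ↥Λ → Bool,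
          Real.exp (β * energy (edgesIn Λ) J (extendConfig Λ t)) * ψ (extendConfig Λ t) := by
        unfold EAcov.Zr
        exact Finset.sum_congr rfl fun t _ => hwrel t
      rw [e1, hS1def, Finset.mul_sum]
      refine Finset.sum_congr rfl fun t _ => ?_
      rw [e2 t]
      ring
    have hgwbar : ∀ t, EAcov.gw Λ β Jbar t
        = EAcov.gw Λ β J t * ψ (extendConfig Λ t) / S1 := by
      intro t
      unfold EAcov.gw
      rw [hwrel t, hZbar, e2 t]
      field_simp
    rw [EAcov.integral_pi_eaGibbs Λ β J s gN hgNc,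
        EAcov.integral_pi_eaGibbs Λ β Jbar s F hF,
        EAcov.integral_pi_eaGibbs Λ β J s gD hgDc]
    have hexp : ∀ x : Fin s → ↥Λ → Bool,
        Real.exp (β * ∑ i : Fin s, energy (edgesIn W) (Jbar - J) (extendConfig Λ (x i)))
          = ∏ i : Fin s, ψ (extendConfig Λ (x i)) := by
      intro x
      rw [Finset.mul_sum, ← Real.exp_sum]
    have hDsum : (∑ x : Fin s → ↥Λ → Bool,
        (∏ i, EAcov.gw Λ β J (x i)) * gD (fun i => extendConfig Λ (x i))) = S1 ^ s := by
      have h1 : ∀ x : Fin s → ↥Λ → Bool,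
          (∏ i, EAcov.gw Λ β J (x i)) * gD (fun i => extendConfig Λ (x i))
            = ∏ i, (EAcov.gw Λ β J (x i) * ψ (extendConfig Λ (x i))) := by
        intro x
        rw [hgDdef, Finset.prod_mul_distrib]
      simp only [h1]
      have hps := Finset.prod_univ_sum (fun _ : Fin s => (Finset.univ : Finset (↥Λ → Bool)))
        (fun _ t => EAcov.gw Λ β J t * ψ (extendConfig Λ t))
      rw [Fintype.piFinset_univ] at hps
      rw [← hps, ← hS1def, Finset.prod_const, Finset.card_univ, Fintype.card_fin]
    rw [hDsum, Finset.sum_mul]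
    refine Finset.sum_congr rfl fun x _ => ?_
    simp only [hgNdef, hgwbar]
    rw [hexp x, Finset.prod_div_distrib, Finset.prod_const, Finset.card_univ,
      Fintype.card_fin, Finset.prod_mul_distrib]
    field_simp
  -- limits
  have hA := h2 s F hF
  have hN := h1 s gN hgNc
  have hD := h1 s gD hgDc
  have hABD : Tendsto
      (fun k => (∫ σ, F σ ∂(Measure.pi fun _ : Fin s => eaGibbs (box d (L k)) β Jbar))
        * (∫ σ, gD σ ∂(Measure.pi fun _ : Fin s => eaGibbs (box d (L k)) β J))) atTop
      (nhds ((∫ σ, F (fun i => σ i.1) ∂MJbar) * (∫ σ, gD (fun i => σ i.1) ∂MJ))) :=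
    hA.mul hD
  have hNeq : (∫ σ, gN (fun i => σ i.1) ∂MJ)
      = (∫ σ, F (fun i => σ i.1) ∂MJbar) * (∫ σ, gD (fun i => σ i.1) ∂MJ) := by
    refine tendsto_nhds_unique hN ?_
    refine hABD.congr fun k => (key k).symm
  -- lower bound for the denominator
  set C : ℝ := ∑ e ∈ edgesIn W, |(Jbar - J) e| with hCdef
  set ε : ℝ := Real.exp (-(β * C)) ^ s with hεdef
  have hεpos : 0 < ε := pow_pos (Real.exp_pos _) s
  have hψlb : ∀ σ, Real.exp (-(β * C)) ≤ ψ σ := by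
    intro σ
    refine Real.exp_le_exp.2 ?_
    have h := (abs_le.1 (EAcov.energy_abs_le (edgesIn W) (Jbar - J) σ)).1
    have h2 : β * (-C) ≤ β * energy (edgesIn W) (Jbar - J) σ :=
      mul_le_mul_of_nonneg_left h hβ.le
    linarith
  have hDlb : ∀ k, ε ≤ ∫ σ, gD σ ∂(Measure.pi fun _ : Fin s => eaGibbs (box d (L k)) β J) := by
    intro k
    set Λ : Finset (Site d) := box d (L k) with hΛdef
    rw [EAcov.integral_pi_eaGibbs Λ β J s gD hgDc]
    have hsum1 : (∑ x : Fin s → ↥Λ → Bool, ∏ i, EAcov.gw Λ β J (x i)) = 1 := by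
      have hps := Finset.prod_univ_sum (fun _ : Fin s => (Finset.univ : Finset (↥Λ → Bool)))
        (fun _ t => EAcov.gw Λ β J t)
      rw [Fintype.piFinset_univ] at hps
      rw [← hps]
      simp [EAcov.gw_sum]
    have hstep : (∑ x : Fin s → ↥Λ → Bool, ε * ∏ i, EAcov.gw Λ β J (x i)) = ε := by
      rw [← Finset.mul_sum, hsum1, mul_one]
    rw [← hstep]
    refine Finset.sum_le_sum fun x _ => ?_
    rw [mul_comm]
    refine mul_le_mul_of_nonneg_left ?_
      (Finset.prod_nonneg fun i _ => (EAcov.gw_pos Λ β J (x i)).le)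
    rw [hgDdef, hεdef]
    calc Real.exp (-(β * C)) ^ s
        = ∏ _i : Fin s, Real.exp (-(β * C)) := by
          rw [Finset.prod_const, Finset.card_univ, Fintype.card_fin]
      _ ≤ ∏ i : Fin s, ψ (extendConfig Λ (x i)) :=
          Finset.prod_le_prod (fun i _ => (Real.exp_pos _).le) (fun i _ => hψlb _)
  have hDge : ε ≤ ∫ σ, gD (fun i => σ i.1) ∂MJ :=
    ge_of_tendsto hD (Filter.Eventually.of_forall hDlb)
  have hDne : (∫ σ, gD (fun i => σ i.1) ∂MJ) ≠ 0 := (lt_of_lt_of_le hεpos hDge).ne'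
  have hfinal : (∫ σ, F (fun i => σ i.1) ∂MJbar)
      = (∫ σ, gN (fun i => σ i.1) ∂MJ) / (∫ σ, gD (fun i => σ i.1) ∂MJ) := by
    rw [eq_div_iff hDne]
    exact hNeq.symm
  exact hfinal
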